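/- The equation 1/t_x + 1/t_y = 2/t_z has infinitely many solutions in positive integers x, y, z with x < z < y, where t_n = n(n+1)/2; i.e., there are infinitely many three-term arithmetic progressions 1/t_x, 1/t_z, 1/t_y. -/

import Mathlib

/-- The n-th triangular number, as a rational. -/
def tri (n : ℕ) : ℚ := n * (n + 1) / 2

/-- Pell-type recursion generating solutions. -/
def pell : ℕ → ℕ × ℕ
  | 0 => (7, 10)
  | n + 1 => (3 * (pell n).1 + 2 * (pell n).2 + 2, 4 * (pell n).1 + 3 * (pell n).2 + 3)

lemma pell_inv (n : ℕ) : 7 ≤ (pell n).1 ∧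
    2 * (pell n).1 * ((pell n).1 + 1) = (pell n).2 * ((pell n).2 + 1) + 2 := by
  induction n with
  | zero => simp [pell]
  | succ n ih =>
    obtain ⟨h7, heq⟩ := ih
    constructor
    · simp only [pell]; omega
    · simp only [pell]; ring_nf; ring_nf at heq; omega

lemma pell_fst_lt (n : ℕ) : (pell n).1 < (pell (n + 1)).1 := by
  simp only [pell]; omega

lemma pell_fst_strictMono : StrictMono (fun n => (pell n).1) :=
  strictMono_nat_of_lt_succ pell_fst_lt

theorem harmonic_triangular_infinitely_many :
    {p : ℕ × ℕ × ℕ | 0 < p.1 ∧ p.1 < p.2.2 ∧ p.2.2 < p.2.1 ∧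
      1 / tri p.1 + 1 / tri p.2.1 = 2 / tri p.2.2}.Infinite := by
  apply Set.infinite_of_injective_forall_mem
    (f := fun n => ((pell n).1, (pell n).2 * ((pell n).2 + 1) / 2, (pell n).2))
  case hi =>
    intro m n h
    have := congrArg Prod.fst h
    simp only at this
    exact pell_fst_strictMono.injective this
  case hf =>
    intro n
    obtain ⟨h7, heq⟩ := pell_inv n
    set a := (pell n).1
    set b := (pell n).2
    have hab : a < b := by nlinarith
    have hb : 7 < b := lt_of_le_of_lt h7 hab
    have h2 : 2 ∣ b * (b + 1) := (Nat.even_mul_succ_self b).two_dvd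
    refine ⟨by omega, hab, by
      obtain ⟨k, hk⟩ := h2
      have h9 : 9 * b ≤ 2 * k := by nlinarith
      simp only
      omega, ?_⟩
    have hcast : ((b * (b + 1) / 2 : ℕ) : ℚ) = (b : ℚ) * (b + 1) / 2 := by
      rw [Nat.cast_div h2 (by norm_num)]; push_cast; ring
    simp only [tri, hcast]
    have ha0 : (0:ℚ) < a := by exact_mod_cast Nat.lt_of_lt_of_le (by norm_num) h7
    have hb0 : (0:ℚ) < b := by exact_mod_cast Nat.lt_of_lt_of_le (by norm_num) (le_of_lt hb)
    have heqQ : 2 * (a:ℚ) * (a + 1) = (b:ℚ) * (b + 1) + 2 := by exact_mod_cast heq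
    have h1 : (a:ℚ) * (a+1) ≠ 0 := by positivity
    have h2' : (b:ℚ) * (b+1) ≠ 0 := by positivity
    have h3 : (b:ℚ) * (b+1) + 2 ≠ 0 := by positivity
    field_simp
    linear_combination (-((b:ℚ)*(b+1))) * heqQ
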